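/- Let μ ∈ ℂ and let a, b ∈ ℝ with π/2 < a < b < 3π/2. Then there exists a constant C > 0 such that for every x of the form x = r·e^{iψ} with r > 0 and a < ψ < b, one has |F(μ;q,x) − (q^μ;q)_∞·e^{−x}| ≤ C·e^{−q·Re(x)}. In particular e^{x}·F(μ;q,x) → (q^μ;q)_∞ as |x| → ∞ with x in this sector. -/

import Mathlib

/-- `(a;c)_n = ∏_{j=0}^{n-1} (1 - a c^j)`. -/
noncomputable def qPoch (a c : ℂ) (n : ℕ) : ℂ := ∏ j ∈ Finset.range n, (1 - a * c ^ j)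

/-- `(a;c)_∞ = ∏_{j=0}^{∞} (1 - a c^j)`. -/
noncomputable def qPochInf (a c : ℂ) : ℂ := ∏' j : ℕ, (1 - a * c ^ j)

/-- `q^μ := exp (μ log q)` for real `q > 0` and complex `μ`. -/
noncomputable def qpow (q : ℝ) (μ : ℂ) : ℂ := Complex.exp (μ * Real.log q)

/-- `F(μ;q,x) = Σ_{n≥0} ((q^μ;q)_n / n!) (-x)^n`. -/
noncomputable def F (μ : ℂ) (q : ℝ) (x : ℂ) : ℂ :=
  ∑' n : ℕ, qPoch (qpow q μ) (q : ℂ) n / (Nat.factorial n : ℂ) * (-x) ^ n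

/-- `(a)_n = a (a+1) ⋯ (a+n-1)`. -/
noncomputable def poch (a : ℂ) (n : ℕ) : ℂ := ∏ j ∈ Finset.range n, (a + (j : ℂ))

/-- `G(a;q,x) = Σ_{n≥0} ((a)_n q^{n(n+1)/2} / (q;q)_n) (-x)^n`. -/
noncomputable def G (a : ℂ) (q : ℝ) (x : ℂ) : ℂ :=
  ∑' n : ℕ, poch a n * (q : ℂ) ^ (n * (n + 1) / 2) / qPoch (q : ℂ) (q : ℂ) n * (-x) ^ n

namespace Stmt8
open Complex Finset Filter Topology

lemma qPoch_succ (a c : ℂ) (n : ℕ) :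
    qPoch a c (n+1) = qPoch a c n * (1 - a * c ^ n) := Finset.prod_range_succ _ _

lemma norm_Q {q : ℝ} (hq0 : 0 < q) : ‖(q:ℂ)‖ = q := by
  rw [Complex.norm_real]; exact abs_of_pos hq0

lemma geom_partial_le {q : ℝ} (hq0 : 0 < q) (hq1 : q < 1) (n : ℕ) :
    ∑ j ∈ range n, q^j ≤ (1-q)⁻¹ := by
  have := Summable.sum_le_tsum (range n) (fun j _ => pow_nonneg hq0.le j)
    (summable_geometric_of_lt_one hq0.le hq1)
  rwa [tsum_geometric_of_lt_one hq0.le hq1] at this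

lemma norm_qPoch_le {q : ℝ} (hq0 : 0 < q) (hq1 : q < 1) (z : ℂ) (n : ℕ) :
    ‖qPoch z (q:ℂ) n‖ ≤ Real.exp (‖z‖ / (1 - q)) := by
  have hq1' : (0:ℝ) < 1 - q := by linarith
  rw [qPoch, norm_prod]
  calc ∏ j ∈ range n, ‖1 - z * (q:ℂ)^j‖
      ≤ ∏ j ∈ range n, Real.exp (‖z‖ * q^j) := by
        apply Finset.prod_le_prod (fun j _ => norm_nonneg _)
        intro j _
        have h1 : ‖1 - z * (q:ℂ)^j‖ ≤ 1 + ‖z‖ * q^j := by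
          calc ‖1 - z * (q:ℂ)^j‖ ≤ ‖(1:ℂ)‖ + ‖z * (q:ℂ)^j‖ := norm_sub_le _ _
            _ = 1 + ‖z‖ * q^j := by rw [norm_one, norm_mul, norm_pow, norm_Q hq0]
        have h2 := Real.add_one_le_exp (‖z‖ * q^j)
        linarith
    _ = Real.exp (∑ j ∈ range n, ‖z‖ * q^j) := by rw [Real.exp_sum]
    _ ≤ Real.exp (‖z‖ / (1 - q)) := by
        apply Real.exp_le_exp.2
        rw [← Finset.mul_sum, div_eq_mul_inv]
        exact mul_le_mul_of_nonneg_left (geom_partial_le hq0 hq1 n) (norm_nonneg z)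

/-- real version of `(q;q)_m` -/
noncomputable def qq (q : ℝ) (m : ℕ) : ℝ := ∏ j ∈ range m, (1 - q^(j+1))

lemma qPoch_qq {q : ℝ} (m : ℕ) : qPoch (q:ℂ) (q:ℂ) m = ((qq q m : ℝ) : ℂ) := by
  rw [qPoch, qq]
  push_cast
  apply Finset.prod_congr rfl
  intro j _
  push_cast
  ring

lemma exp_le_one_sub {q u : ℝ} (hq1 : q < 1) (hu0 : 0 ≤ u) (huq : u ≤ q) :
    Real.exp (-(u/(1-q))) ≤ 1 - u := by
  have hq1' : (0:ℝ) < 1 - q := by linarith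
  have hv : 0 ≤ u/(1-q) := div_nonneg hu0 hq1'.le
  have h1 : Real.exp (-(u/(1-q))) ≤ (1 + u/(1-q))⁻¹ := by
    rw [Real.exp_neg]
    apply inv_anti₀ (by linarith)
    linarith [Real.add_one_le_exp (u/(1-q))]
  refine h1.trans ?_
  rw [inv_le_iff_one_le_mul₀ (by positivity)]
  have : (1 - u) * (1 + u / (1-q)) - 1 = u * (q - u) / (1 - q) := by field_simp; ring
  nlinarith [div_nonneg (mul_nonneg hu0 (by linarith : (0:ℝ) ≤ q - u)) hq1'.le]

lemma qq_lower {q : ℝ} (hq0 : 0 < q) (hq1 : q < 1) (m : ℕ) :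
    Real.exp (-(q/(1-q)^2)) ≤ qq q m := by
  have hq1' : (0:ℝ) < 1 - q := by linarith
  calc Real.exp (-(q/(1-q)^2)) ≤ Real.exp (∑ j ∈ range m, -(q^(j+1)/(1-q))) := by
        apply Real.exp_le_exp.2
        have h1 : ∑ j ∈ range m, q^(j+1) ≤ q * (1-q)⁻¹ := by
          have := geom_partial_le hq0 hq1 m
          calc ∑ j ∈ range m, q^(j+1) = q * ∑ j ∈ range m, q^j := by
                rw [Finset.mul_sum]; exact Finset.sum_congr rfl fun j _ => (pow_succ' q j)
            _ ≤ q * (1-q)⁻¹ := mul_le_mul_of_nonneg_left this hq0.le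
        have h2 : ∑ j ∈ range m, -(q ^ (j + 1) / (1 - q)) = -((∑ j ∈ range m, q^(j+1))/(1-q)) := by
          simp [neg_div, Finset.sum_div]
        rw [h2, neg_le_neg_iff, div_le_div_iff₀ hq1' (by positivity)]
        calc (∑ j ∈ range m, q^(j+1)) * (1-q)^2 ≤ (q * (1-q)⁻¹) * (1-q)^2 := by
              apply mul_le_mul_of_nonneg_right h1 (by positivity)
          _ = q * (1-q) := by field_simp
    _ ≤ qq q m := by
        rw [Real.exp_sum, qq]
        apply Finset.prod_le_prod (fun j _ => (Real.exp_pos _).le)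
        intro j _
        apply exp_le_one_sub hq1 (by positivity)
        calc q^(j+1) ≤ q^1 := pow_le_pow_of_le_one hq0.le hq1.le (by omega)
          _ = q := pow_one q


lemma qq_pos {q : ℝ} (hq0 : 0 < q) (hq1 : q < 1) (m : ℕ) : 0 < qq q m :=
  lt_of_lt_of_le (Real.exp_pos _) (qq_lower hq0 hq1 m)

lemma norm_qPoch_qq {q : ℝ} (hq0 : 0 < q) (hq1 : q < 1) (m : ℕ) :
    ‖qPoch (q:ℂ) (q:ℂ) m‖ = qq q m := by
  rw [qPoch_qq, Complex.norm_real]; exact abs_of_pos (qq_pos hq0 hq1 m)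

lemma qPoch_q_ne {q : ℝ} (hq0 : 0 < q) (hq1 : q < 1) (m : ℕ) :
    qPoch (q:ℂ) (q:ℂ) m ≠ 0 := by
  intro h
  have := norm_qPoch_qq hq0 hq1 m
  rw [h, norm_zero] at this
  exact absurd this.symm (ne_of_gt (qq_pos hq0 hq1 m))

/-- Euler coefficients: `(-1)^m q^{m(m-1)/2} / (q;q)_m`. -/
noncomputable def eulc (q : ℝ) (m : ℕ) : ℂ :=
  (-1)^m * (q:ℂ)^(m*(m-1)/2) / qPoch (q:ℂ) (q:ℂ) m

lemma norm_eulc_le {q : ℝ} (hq0 : 0 < q) (hq1 : q < 1) (m : ℕ) :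
    ‖eulc q m‖ ≤ q^(m*(m-1)/2) / Real.exp (-(q/(1-q)^2)) := by
  rw [eulc, norm_div, norm_mul, norm_pow, norm_pow, norm_neg, norm_one, one_pow, one_mul,
    norm_Q hq0, norm_qPoch_qq hq0 hq1]
  apply div_le_div_of_nonneg_left (by positivity) (Real.exp_pos _) (qq_lower hq0 hq1 m)

lemma summable_tri {q : ℝ} (hq0 : 0 < q) (hq1 : q < 1) (R : ℝ) (hR : 0 ≤ R) :
    Summable (fun m : ℕ => q^(m*(m-1)/2) * R^m) := by
  obtain ⟨N, hN⟩ := exists_pow_lt_of_lt_one (x := (2*(R+1))⁻¹) (by positivity) hq1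
  apply summable_of_ratio_norm_eventually_le (r := 1/2) (by norm_num)
  filter_upwards [Filter.eventually_ge_atTop N] with m hm
  have htri : (m+1)*((m+1)-1)/2 = m*(m-1)/2 + m := Nat.triangle_succ m
  rw [Real.norm_of_nonneg (by positivity : (0:ℝ) ≤ q^((m+1)*((m+1)-1)/2) * R^(m+1)),
    Real.norm_of_nonneg (by positivity : (0:ℝ) ≤ q^(m*(m-1)/2) * R^m), htri, pow_add, pow_succ]
  have hle : q^m * R ≤ 1/2 := by
    have h1 : q^m ≤ q^N := pow_le_pow_of_le_one hq0.le hq1.le hm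
    have h2 : q^m * R ≤ (2*(R+1))⁻¹ * R := by
      apply mul_le_mul_of_nonneg_right (h1.trans hN.le) hR
    refine h2.trans ?_
    rw [inv_mul_le_iff₀ (by positivity)]
    nlinarith
  calc q ^ (m * (m - 1) / 2) * q ^ m * (R ^ m * R)
      = (q^m * R) * (q ^ (m * (m - 1) / 2) * R ^ m) := by ring
    _ ≤ (1/2) * (q ^ (m * (m - 1) / 2) * R ^ m) := by
        apply mul_le_mul_of_nonneg_right hle (by positivity)

/-- The Euler series `E(z) = Σ eulc m z^m`, equal to `(z;q)_∞`. -/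
noncomputable def Efun (q : ℝ) (z : ℂ) : ℂ := ∑' m : ℕ, eulc q m * z^m

lemma summable_norm_E {q : ℝ} (hq0 : 0 < q) (hq1 : q < 1) (z : ℂ) :
    Summable (fun m : ℕ => ‖eulc q m * z^m‖) := by
  refine Summable.of_nonneg_of_le (fun m => norm_nonneg _) (fun m => ?_)
    (((summable_tri hq0 hq1 ‖z‖ (norm_nonneg z)).mul_right ((Real.exp (-(q/(1-q)^2)))⁻¹)))
  rw [norm_mul, norm_pow]
  calc ‖eulc q m‖ * ‖z‖^m ≤ (q^(m*(m-1)/2) / Real.exp (-(q/(1-q)^2))) * ‖z‖^m := by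
        apply mul_le_mul_of_nonneg_right (norm_eulc_le hq0 hq1 m) (by positivity)
    _ = q ^ (m * (m - 1) / 2) * ‖z‖ ^ m * (Real.exp (-(q / (1 - q) ^ 2)))⁻¹ := by ring

lemma summable_E {q : ℝ} (hq0 : 0 < q) (hq1 : q < 1) (z : ℂ) :
    Summable (fun m : ℕ => eulc q m * z^m) := (summable_norm_E hq0 hq1 z).of_norm

lemma eulc_zero (q : ℝ) : eulc q 0 = 1 := by simp [eulc, qPoch]

set_option maxHeartbeats 1000000 in
lemma eulc_rec {q : ℝ} (hq0 : 0 < q) (hq1 : q < 1) (m : ℕ) :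
    eulc q (m+1) * (q:ℂ)^(m+1) - eulc q m * (q:ℂ)^m = eulc q (m+1) := by
  have hD := qPoch_q_ne hq0 hq1 m
  have hg : (1 : ℂ) - (q:ℂ) * (q:ℂ)^m ≠ 0 := by
    intro h
    have : ‖(1:ℂ)‖ = ‖(q:ℂ) * (q:ℂ)^m‖ := by rw [sub_eq_zero] at h; rw [h]
    rw [norm_one, norm_mul, norm_pow, norm_Q hq0] at this
    nlinarith [pow_le_one₀ hq0.le hq1.le (n := m), pow_pos hq0 m]
  have hP : qPoch (q:ℂ) (q:ℂ) (m+1) = qPoch (q:ℂ) (q:ℂ) m * (1 - (q:ℂ) * (q:ℂ)^m) :=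
    qPoch_succ _ _ _
  have htri : (m+1)*((m+1)-1)/2 = m*(m-1)/2 + m := Nat.triangle_succ m
  have key : eulc q (m+1) * ((1:ℂ) - (q:ℂ)*(q:ℂ)^m) = -((q:ℂ)^m * eulc q m) := by
    rw [eulc, eulc, hP, htri, pow_add]
    field_simp
    ring
  linear_combination -key

lemma E_funeq {q : ℝ} (hq0 : 0 < q) (hq1 : q < 1) (z : ℂ) :
    Efun q z = (1 - z) * Efun q ((q:ℂ) * z) := by
  set s : ℕ → ℂ := fun m => eulc q m * ((q:ℂ) * z)^m with hs
  have h1 : HasSum s (Efun q ((q:ℂ)*z)) := (summable_E hq0 hq1 _).hasSum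
  have h2 : HasSum (fun m => z * s m) (z * Efun q ((q:ℂ)*z)) := h1.mul_left z
  set w : ℕ → ℂ := fun m => match m with | 0 => 0 | (k+1) => z * s k with hw
  have h3' : HasSum w (w 0 + z * Efun q ((q:ℂ)*z)) := HasSum.zero_add (f := w) h2
  have h3 : HasSum w (z * Efun q ((q:ℂ)*z)) := by
    have hw0 : w 0 = 0 := rfl
    rwa [hw0, zero_add] at h3'
  have h4 : HasSum (fun m => s m - w m) (Efun q ((q:ℂ)*z) - z * Efun q ((q:ℂ)*z)) := h1.sub h3
  have h5 : (fun m => s m - w m) = fun m => eulc q m * z^m := by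
    funext m
    match m with
    | 0 => simp [hw, hs]
    | (k+1) =>
      show s (k+1) - z * s k = eulc q (k+1) * z^(k+1)
      rw [hs]
      simp only
      have := eulc_rec hq0 hq1 k
      calc eulc q (k+1) * ((q:ℂ)*z)^(k+1) - z * (eulc q k * ((q:ℂ)*z)^k)
          = (eulc q (k+1) * (q:ℂ)^(k+1) - eulc q k * (q:ℂ)^k) * z^(k+1) := by
            rw [mul_pow, mul_pow]; ring
        _ = eulc q (k+1) * z^(k+1) := by rw [this]
  rw [h5] at h4
  rw [Efun, h4.tsum_eq]
  ring

lemma E_prod {q : ℝ} (hq0 : 0 < q) (hq1 : q < 1) (z : ℂ) (N : ℕ) :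
    Efun q z = qPoch z (q:ℂ) N * Efun q ((q:ℂ)^N * z) := by
  induction N with
  | zero => simp [qPoch]
  | succ N ih =>
    rw [ih, E_funeq hq0 hq1 ((q:ℂ)^N * z), qPoch_succ]
    have : (q:ℂ) * ((q:ℂ)^N * z) = (q:ℂ)^(N+1) * z := by ring
    rw [this]
    ring

lemma E_sub_one {q : ℝ} (hq0 : 0 < q) (hq1 : q < 1) (w : ℂ) :
    ‖Efun q w - 1‖ ≤ ∑' m : ℕ, ‖eulc q (m+1) * w^(m+1)‖ := by
  have hsum := summable_E hq0 hq1 w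
  have h0 : Efun q w = eulc q 0 * w^0 + ∑' m, eulc q (m+1) * w^(m+1) :=
    Summable.tsum_eq_zero_add hsum
  rw [h0, eulc_zero]
  simp only [pow_zero, mul_one, add_sub_cancel_left]
  exact norm_tsum_le_tsum_norm ((summable_norm_E hq0 hq1 w).comp_injective (add_left_injective 1))

lemma E_near_one {q : ℝ} (hq0 : 0 < q) (hq1 : q < 1) (z : ℂ) (N : ℕ) :
    ‖Efun q ((q:ℂ)^N * z) - 1‖ ≤ q^N * ∑' m : ℕ, ‖eulc q (m+1) * z^(m+1)‖ := by
  refine (E_sub_one hq0 hq1 _).trans ?_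
  rw [← tsum_mul_left]
  apply Summable.tsum_le_tsum _ ((summable_norm_E hq0 hq1 _).comp_injective (add_left_injective 1))
    (((summable_norm_E hq0 hq1 z).comp_injective (add_left_injective 1)).mul_left _)
  intro m
  show ‖eulc q (m+1) * ((q:ℂ)^N * z)^(m+1)‖ ≤ q^N * ‖eulc q (m+1) * z^(m+1)‖
  rw [mul_pow, norm_mul, norm_mul, norm_pow, norm_pow, norm_Q hq0, norm_mul, norm_pow]
  have h1 : (q^N)^(m+1) ≤ q^N := pow_le_of_le_one (by positivity) (pow_le_one₀ hq0.le hq1.le) (by omega)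
  calc ‖eulc q (m+1)‖ * ((q^N)^(m+1) * ‖z‖^(m+1))
      ≤ ‖eulc q (m+1)‖ * (q^N * ‖z‖^(m+1)) := by
        apply mul_le_mul_of_nonneg_left (mul_le_mul_of_nonneg_right h1 (by positivity)) (norm_nonneg _)
    _ = q^N * (‖eulc q (m+1)‖ * ‖z‖^(m+1)) := by ring

lemma tendsto_qPoch {q : ℝ} (hq0 : 0 < q) (hq1 : q < 1) (z : ℂ) :
    Tendsto (fun N => qPoch z (q:ℂ) N) atTop (𝓝 (Efun q z)) := by
  have key : ∀ N, qPoch z (q:ℂ) N - Efun q z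
      = -(qPoch z (q:ℂ) N * (Efun q ((q:ℂ)^N * z) - 1)) := by
    intro N
    have := E_prod hq0 hq1 z N
    rw [this]; ring
  have hnorm : ∀ N, ‖qPoch z (q:ℂ) N - Efun q z‖
      ≤ (Real.exp (‖z‖/(1-q)) * ∑' m : ℕ, ‖eulc q (m+1) * z^(m+1)‖) * q^N := by
    intro N
    rw [key N, norm_neg, norm_mul]
    calc ‖qPoch z (q:ℂ) N‖ * ‖Efun q ((q:ℂ)^N * z) - 1‖
        ≤ Real.exp (‖z‖/(1-q)) * (q^N * ∑' m : ℕ, ‖eulc q (m+1) * z^(m+1)‖) := by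
          apply mul_le_mul (norm_qPoch_le hq0 hq1 z N) (E_near_one hq0 hq1 z N)
            (norm_nonneg _) (Real.exp_pos _).le
      _ = (Real.exp (‖z‖/(1-q)) * ∑' m : ℕ, ‖eulc q (m+1) * z^(m+1)‖) * q^N := by ring
  have hz : Tendsto (fun N => qPoch z (q:ℂ) N - Efun q z) atTop (𝓝 0) := by
    apply squeeze_zero_norm hnorm
    rw [show (0:ℝ) = (Real.exp (‖z‖/(1-q)) * ∑' m : ℕ, ‖eulc q (m+1) * z^(m+1)‖) * 0 by ring]
    exact (tendsto_pow_atTop_nhds_zero_of_lt_one hq0.le hq1).const_mul _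
  have := hz.add_const (Efun q z)
  simpa using this

lemma qPochInf_eq {q : ℝ} (hq0 : 0 < q) (hq1 : q < 1) (z : ℂ) :
    qPochInf z (q:ℂ) = Efun q z := by
  by_cases hzero : ∃ j : ℕ, 1 - z * (q:ℂ)^j = 0
  · obtain ⟨j₀, hj₀⟩ := hzero
    have hqp : qPoch z (q:ℂ) (j₀+1) = 0 :=
      Finset.prod_eq_zero (Finset.self_mem_range_succ j₀) hj₀
    have hE : Efun q z = 0 := by
      rw [E_prod hq0 hq1 z (j₀+1), hqp, zero_mul]
    have hprod : HasProd (fun j : ℕ => 1 - z * (q:ℂ)^j) 0 := by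
      rw [HasProd]
      apply Tendsto.congr' _ tendsto_const_nhds
      filter_upwards [Filter.eventually_ge_atTop ({j₀} : Finset ℕ)] with s hs
      exact (Finset.prod_eq_zero (hs (Finset.mem_singleton_self j₀)) hj₀).symm
    rw [qPochInf, hprod.tprod_eq, hE]
  · push_neg at hzero
    have hlog : Summable (fun j : ℕ => Complex.log (1 - z * (q:ℂ)^j)) := by
      obtain ⟨N, hN⟩ := exists_pow_lt_of_lt_one (x := (2*(‖z‖+1))⁻¹) (by positivity) hq1
      rw [← summable_nat_add_iff N]
      have hbound : ∀ j : ℕ, ‖Complex.log (1 - z * (q:ℂ)^(j+N))‖ ≤ (3/2) * (‖z‖ * q^N) * q^j := by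
        intro j
        have hsmall : ‖-(z * (q:ℂ)^(j+N))‖ ≤ 1/2 := by
          rw [norm_neg, norm_mul, norm_pow, norm_Q hq0, pow_add]
          calc ‖z‖ * (q^j * q^N) ≤ ‖z‖ * q^N := by
                apply mul_le_mul_of_nonneg_left _ (norm_nonneg z)
                calc q^j * q^N ≤ 1 * q^N := by
                      apply mul_le_mul_of_nonneg_right (pow_le_one₀ hq0.le hq1.le) (by positivity)
                  _ = q^N := one_mul _
            _ ≤ (‖z‖+1) * q^N := by nlinarith [pow_pos hq0 N]
            _ ≤ 1/2 := by
                have hz1 : (0:ℝ) < ‖z‖ + 1 := by positivity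
                have h' : (‖z‖+1) * q^N ≤ (‖z‖+1) * (2*(‖z‖+1))⁻¹ :=
                  mul_le_mul_of_nonneg_left hN.le hz1.le
                refine h'.trans ?_
                rw [show (‖z‖+1) * (2*(‖z‖+1))⁻¹ = 1/2 by field_simp]
        have := Complex.norm_log_one_add_half_le_self (z := -(z * (q:ℂ)^(j+N))) hsmall
        rw [show (1:ℂ) + -(z * (q:ℂ)^(j+N)) = 1 - z * (q:ℂ)^(j+N) by ring] at this
        refine this.trans ?_
        rw [norm_neg, norm_mul, norm_pow, norm_Q hq0, pow_add]
        ring_nf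
        nlinarith [pow_pos hq0 j, pow_pos hq0 N, norm_nonneg z, pow_nonneg hq0.le j, pow_nonneg hq0.le N]
      apply Summable.of_norm_bounded ?_ hbound
      exact (summable_geometric_of_lt_one hq0.le hq1).mul_left _
    have hmult : Multipliable (fun j : ℕ => 1 - z * (q:ℂ)^j) := by
      have := Complex.multipliable_of_summable_log hlog
      exact this
    have h1 : Tendsto (fun N => ∏ i ∈ Finset.range N, (1 - z * (q:ℂ)^i)) atTop
        (𝓝 (∏' j : ℕ, (1 - z * (q:ℂ)^j))) := hmult.hasProd.tendsto_prod_nat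
    have h2 := tendsto_qPoch hq0 hq1 z
    rw [qPochInf]
    exact tendsto_nhds_unique h1 h2

/-- generalized F with arbitrary first parameter -/
noncomputable def FF (q : ℝ) (z x : ℂ) : ℂ :=
  ∑' n : ℕ, qPoch z (q:ℂ) n / (Nat.factorial n : ℂ) * (-x)^n

lemma F_eq_FF (μ : ℂ) (q : ℝ) (x : ℂ) : F μ q x = FF q (qpow q μ) x := rfl

lemma tsum_exp_complex (w : ℂ) : ∑' n : ℕ, w^n / (Nat.factorial n : ℂ) = Complex.exp w := by
  rw [Complex.exp_eq_exp_ℂ, NormedSpace.exp_eq_tsum_div]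

lemma tsum_exp_real (r : ℝ) : ∑' n : ℕ, r^n / (Nat.factorial n : ℝ) = Real.exp r := by
  rw [Real.exp_eq_exp_ℝ, NormedSpace.exp_eq_tsum_div]

lemma summable_exp_complex (w : ℂ) : Summable (fun n : ℕ => w^n / (Nat.factorial n : ℂ)) :=
  NormedSpace.expSeries_div_summable w

lemma norm_FFterm (q : ℝ) (z x : ℂ) (n : ℕ) :
    ‖qPoch z (q:ℂ) n / (Nat.factorial n : ℂ) * (-x)^n‖
      = ‖qPoch z (q:ℂ) n‖ * ‖x‖^n / (Nat.factorial n : ℝ) := by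
  rw [norm_mul, norm_div, norm_pow, norm_neg, Complex.norm_natCast]
  ring

lemma summable_norm_FF {q : ℝ} (hq0 : 0 < q) (hq1 : q < 1) (z x : ℂ) :
    Summable (fun n : ℕ => ‖qPoch z (q:ℂ) n / (Nat.factorial n : ℂ) * (-x)^n‖) := by
  refine Summable.of_nonneg_of_le (fun n => norm_nonneg _) (fun n => ?_)
    ((Real.summable_pow_div_factorial ‖x‖).mul_left (Real.exp (‖z‖/(1-q))))
  rw [norm_FFterm]
  rw [div_le_iff₀ (by positivity : (0:ℝ) < (Nat.factorial n : ℝ))]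
  have hfne : (Nat.factorial n : ℝ) ≠ 0 := by positivity
  rw [show Real.exp (‖z‖/(1-q)) * (‖x‖^n / (Nat.factorial n : ℝ)) * (Nat.factorial n : ℝ)
      = Real.exp (‖z‖/(1-q)) * ‖x‖^n by field_simp]
  exact mul_le_mul_of_nonneg_right (norm_qPoch_le hq0 hq1 z n) (by positivity)

lemma summable_FF {q : ℝ} (hq0 : 0 < q) (hq1 : q < 1) (z x : ℂ) :
    Summable (fun n : ℕ => qPoch z (q:ℂ) n / (Nat.factorial n : ℂ) * (-x)^n) :=
  (summable_norm_FF hq0 hq1 z x).of_norm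

lemma norm_FF_le {q : ℝ} (hq0 : 0 < q) (hq1 : q < 1) (z x : ℂ) :
    ‖FF q z x‖ ≤ Real.exp (‖z‖/(1-q)) * Real.exp ‖x‖ := by
  refine (norm_tsum_le_tsum_norm (summable_norm_FF hq0 hq1 z x)).trans ?_
  have h1 : ∀ n : ℕ, ‖qPoch z (q:ℂ) n / (Nat.factorial n : ℂ) * (-x)^n‖
      ≤ Real.exp (‖z‖/(1-q)) * (‖x‖^n / (Nat.factorial n : ℝ)) := by
    intro n
    rw [norm_FFterm, div_le_iff₀ (by positivity : (0:ℝ) < (Nat.factorial n : ℝ))]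
    have hfne : (Nat.factorial n : ℝ) ≠ 0 := by positivity
    rw [show Real.exp (‖z‖/(1-q)) * (‖x‖^n / (Nat.factorial n : ℝ)) * (Nat.factorial n : ℝ)
        = Real.exp (‖z‖/(1-q)) * ‖x‖^n by field_simp]
    exact mul_le_mul_of_nonneg_right (norm_qPoch_le hq0 hq1 z n) (by positivity)
  refine (Summable.tsum_le_tsum h1 (summable_norm_FF hq0 hq1 z x)
    ((Real.summable_pow_div_factorial ‖x‖).mul_left _)).trans ?_
  rw [tsum_mul_left, tsum_exp_real]

lemma E_tail {q : ℝ} (hq0 : 0 < q) (hq1 : q < 1) (w : ℂ) :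
    ∑' m : ℕ, eulc q (m+1) * w^(m+1) = Efun q w - 1 := by
  have h0 : Efun q w = eulc q 0 * w^0 + ∑' m, eulc q (m+1) * w^(m+1) :=
    Summable.tsum_eq_zero_add (summable_E hq0 hq1 w)
  rw [h0, eulc_zero]
  simp

lemma summable_E_tail_norm {q : ℝ} (hq0 : 0 < q) (hq1 : q < 1) (w : ℂ) :
    Summable (fun m : ℕ => ‖eulc q (m+1) * w^(m+1)‖) :=
  (summable_norm_E hq0 hq1 w).comp_injective (add_left_injective 1)

lemma summable_E_tail {q : ℝ} (hq0 : 0 < q) (hq1 : q < 1) (w : ℂ) :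
    Summable (fun m : ℕ => eulc q (m+1) * w^(m+1)) :=
  (summable_E_tail_norm hq0 hq1 w).of_norm

/-- the double family for Fubini -/
noncomputable def dd (q : ℝ) (z x : ℂ) (p : ℕ × ℕ) : ℂ :=
  (qPoch z (q:ℂ) p.1 / (Nat.factorial p.1 : ℂ) * (-x)^p.1)
    * (eulc q (p.2+1) * (z * (q:ℂ)^p.1)^(p.2+1))

lemma summable_dd {q : ℝ} (hq0 : 0 < q) (hq1 : q < 1) (z x : ℂ) :
    Summable (dd q z x) := by
  apply Summable.of_norm
  refine Summable.of_nonneg_of_le (fun p => norm_nonneg _) (fun p => ?_)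
    (Summable.mul_of_nonneg
      (f := fun n : ℕ => Real.exp (‖z‖/(1-q)) * ((q * ‖x‖)^n / (Nat.factorial n : ℝ)))
      (g := fun m : ℕ => ‖eulc q (m+1) * z^(m+1)‖)
      ((Real.summable_pow_div_factorial (q * ‖x‖)).mul_left _)
      (summable_E_tail_norm hq0 hq1 z)
      (fun n => by positivity) (fun m => norm_nonneg _))
  obtain ⟨n, m⟩ := p
  show ‖_ * _‖ ≤ _
  rw [norm_mul, norm_FFterm]
  have h2 : ‖(z * (q:ℂ)^n)^(m+1)‖ ≤ ‖z‖^(m+1) * q^n := by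
    rw [norm_pow, norm_mul, norm_pow, norm_Q hq0, mul_pow]
    have : (q^n)^(m+1) ≤ q^n := pow_le_of_le_one (by positivity) (pow_le_one₀ hq0.le hq1.le) (by omega)
    exact mul_le_mul_of_nonneg_left this (by positivity)
  have h3 : ‖eulc q (m+1) * (z * (q:ℂ)^n)^(m+1)‖ ≤ ‖eulc q (m+1) * z^(m+1)‖ * q^n := by
    have hz : ‖eulc q (m+1) * z^(m+1)‖ = ‖eulc q (m+1)‖ * ‖z‖^(m+1) := by
      rw [norm_mul, norm_pow]
    rw [norm_mul, hz]
    calc ‖eulc q (m+1)‖ * ‖(z * (q:ℂ)^n)^(m+1)‖ ≤ ‖eulc q (m+1)‖ * (‖z‖^(m+1) * q^n) :=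
          mul_le_mul_of_nonneg_left h2 (norm_nonneg _)
      _ = ‖eulc q (m+1)‖ * ‖z‖^(m+1) * q^n := by ring
  calc ‖qPoch z (q:ℂ) n‖ * ‖x‖^n / (Nat.factorial n : ℝ) * ‖eulc q (m+1) * (z * (q:ℂ)^n)^(m+1)‖
      ≤ (Real.exp (‖z‖/(1-q)) * ‖x‖^n / (Nat.factorial n : ℝ)) * (‖eulc q (m+1) * z^(m+1)‖ * q^n) := by
        apply mul_le_mul _ h3 (norm_nonneg _) (by positivity)
        apply div_le_div_of_nonneg_right _ (by positivity)
        exact mul_le_mul_of_nonneg_right (norm_qPoch_le hq0 hq1 z n) (by positivity)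
    _ = Real.exp (‖z‖/(1-q)) * ((q*‖x‖)^n / (Nat.factorial n : ℝ)) * ‖eulc q (m+1) * z^(m+1)‖ := by
        rw [mul_pow]; ring

lemma dd_inner_m {q : ℝ} (hq0 : 0 < q) (hq1 : q < 1) (z x : ℂ) (n : ℕ) :
    ∑' m : ℕ, dd q z x (n, m)
      = qPoch z (q:ℂ) n / (Nat.factorial n : ℂ) * (-x)^n * (Efun q (z * (q:ℂ)^n) - 1) := by
  rw [← E_tail hq0 hq1 (z * (q:ℂ)^n), ← tsum_mul_left]
  rfl

lemma dd_inner_n {q : ℝ} (hq0 : 0 < q) (hq1 : q < 1) (z x : ℂ) (m : ℕ) :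
    ∑' n : ℕ, dd q z x (n, m)
      = eulc q (m+1) * z^(m+1) * FF q z ((q:ℂ)^(m+1) * x) := by
  rw [FF, ← tsum_mul_left]
  apply tsum_congr
  intro n
  show (qPoch z (q:ℂ) n / (Nat.factorial n : ℂ) * (-x)^n) * (eulc q (m+1) * (z * (q:ℂ)^n)^(m+1))
    = eulc q (m+1) * z^(m+1) * (qPoch z (q:ℂ) n / (Nat.factorial n : ℂ) * (-((q:ℂ)^(m+1) * x))^n)
  have h1 : (-((q:ℂ)^(m+1) * x))^n = ((q:ℂ)^(m+1))^n * (-x)^n := by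
    rw [show -((q:ℂ)^(m+1) * x) = (q:ℂ)^(m+1) * (-x) by ring, mul_pow]
  have h2 : (z * (q:ℂ)^n)^(m+1) = z^(m+1) * ((q:ℂ)^(m+1))^n := by
    rw [mul_pow, ← pow_mul, ← pow_mul, Nat.mul_comm]
  rw [h1, h2]
  ring

/-- Key identity:  `E(z) e^{-x} - F(z,x) = Σ_{m≥0} eulc(m+1) z^{m+1} F(z, q^{m+1} x)`. -/
lemma keyId {q : ℝ} (hq0 : 0 < q) (hq1 : q < 1) (z x : ℂ) :
    Efun q z * Complex.exp (-x) - FF q z x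
      = ∑' m : ℕ, eulc q (m+1) * z^(m+1) * FF q z ((q:ℂ)^(m+1) * x) := by
  have hdd := summable_dd hq0 hq1 z x
  have hcomm : ∑' (m : ℕ) (n : ℕ), dd q z x (n, m) = ∑' (n : ℕ) (m : ℕ), dd q z x (n, m) := by
    exact Summable.tsum_comm (f := fun n m => dd q z x (n, m)) hdd
  have hleft : ∑' (n : ℕ) (m : ℕ), dd q z x (n, m) = Efun q z * Complex.exp (-x) - FF q z x := by
    have e1 : ∀ n : ℕ, ∑' m : ℕ, dd q z x (n, m)
        = Efun q z * ((-x)^n / (Nat.factorial n : ℂ))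
          - qPoch z (q:ℂ) n / (Nat.factorial n : ℂ) * (-x)^n := by
      intro n
      rw [dd_inner_m hq0 hq1 z x n]
      have hqe : qPoch z (q:ℂ) n * Efun q (z * (q:ℂ)^n) = Efun q z := by
        rw [mul_comm z ((q:ℂ)^n)]
        exact (E_prod hq0 hq1 z n).symm
      calc qPoch z (q:ℂ) n / (Nat.factorial n : ℂ) * (-x)^n * (Efun q (z * (q:ℂ)^n) - 1)
          = (qPoch z (q:ℂ) n * Efun q (z * (q:ℂ)^n)) * ((-x)^n / (Nat.factorial n : ℂ))
            - qPoch z (q:ℂ) n / (Nat.factorial n : ℂ) * (-x)^n := by ring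
        _ = Efun q z * ((-x)^n / (Nat.factorial n : ℂ))
            - qPoch z (q:ℂ) n / (Nat.factorial n : ℂ) * (-x)^n := by rw [hqe]
    rw [tsum_congr e1]
    have hs1 : Summable (fun n : ℕ => Efun q z * ((-x)^n / (Nat.factorial n : ℂ))) :=
      (summable_exp_complex (-x)).mul_left _
    have hs2 := summable_FF hq0 hq1 z x
    rw [Summable.tsum_sub hs1 hs2, tsum_mul_left, tsum_exp_complex, FF]
  have hright : ∑' (m : ℕ) (n : ℕ), dd q z x (n, m)
      = ∑' m : ℕ, eulc q (m+1) * z^(m+1) * FF q z ((q:ℂ)^(m+1) * x) :=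
    tsum_congr (dd_inner_n hq0 hq1 z x)
  rw [← hleft, ← hcomm, hright]

/-- recursive constant sequence -/
noncomputable def Bseq (K Pa A : ℝ) : ℕ → ℝ
  | 0 => K
  | (k+1) => K + Pa + A * Bseq K Pa A k

lemma Bseq_ge {K Pa A : ℝ} (hK : 0 < K) (hPa : 0 ≤ Pa) (hA : 0 ≤ A) (k : ℕ) :
    K ≤ Bseq K Pa A k := by
  induction k with
  | zero => exact le_refl _
  | succ k ih =>
    have : 0 ≤ A * Bseq K Pa A k := mul_nonneg hA (hK.le.trans ih)
    show K ≤ K + Pa + A * Bseq K Pa A k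
    linarith

section Iter

lemma t_nonneg {c₀ : ℝ} (hc₀ : 0 < c₀) (x : ℂ) (hre : c₀ * ‖x‖ ≤ -x.re) : (0:ℝ) ≤ -x.re :=
  le_trans (mul_nonneg hc₀.le (norm_nonneg x)) hre

lemma base_bound {q : ℝ} (hq0 : 0 < q) (hq1 : q < 1) (z : ℂ) (c₀ : ℝ)
    (m₀ : ℕ) (hm₀ : q^m₀ ≤ q * c₀) (x : ℂ) (hre : c₀ * ‖x‖ ≤ -x.re) (j : ℕ) (hj : m₀ ≤ j) :
    ‖FF q z ((q:ℂ)^j * x)‖ ≤ Real.exp (‖z‖/(1-q)) * Real.exp (q * (-x.re)) := by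
  refine (norm_FF_le hq0 hq1 z _).trans ?_
  apply mul_le_mul_of_nonneg_left _ (Real.exp_pos _).le
  apply Real.exp_le_exp.2
  rw [norm_mul, norm_pow, norm_Q hq0]
  calc q^j * ‖x‖ ≤ q^m₀ * ‖x‖ :=
        mul_le_mul_of_nonneg_right (pow_le_pow_of_le_one hq0.le hq1.le hj) (norm_nonneg x)
    _ ≤ (q * c₀) * ‖x‖ := mul_le_mul_of_nonneg_right hm₀ (norm_nonneg x)
    _ = q * (c₀ * ‖x‖) := by ring
    _ ≤ q * (-x.re) := mul_le_mul_of_nonneg_left hre hq0.le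

lemma pow_re_le {q : ℝ} (hq0 : 0 < q) (hq1 : q < 1) {c₀ : ℝ} (hc₀ : 0 < c₀)
    (x : ℂ) (hre : c₀ * ‖x‖ ≤ -x.re) (j : ℕ) (hj : 1 ≤ j) :
    ‖Complex.exp (-((q:ℂ)^j * x))‖ ≤ Real.exp (q * (-x.re)) := by
  have h1 : ((q:ℂ)^j * x).re = q^j * x.re := by
    rw [show ((q:ℂ)^j) = ((q^j : ℝ) : ℂ) by push_cast; ring]
    exact Complex.re_ofReal_mul _ _
  rw [Complex.norm_exp, Complex.neg_re, h1]
  apply Real.exp_le_exp.2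
  have hqj : q^j ≤ q := by
    calc q^j ≤ q^1 := pow_le_pow_of_le_one hq0.le hq1.le hj
      _ = q := pow_one q
  calc -(q^j * x.re) = q^j * (-x.re) := by ring
    _ ≤ q * (-x.re) := mul_le_mul_of_nonneg_right hqj (t_nonneg hc₀ x hre)

lemma iter_bound {q : ℝ} (hq0 : 0 < q) (hq1 : q < 1) (z : ℂ) {c₀ : ℝ} (hc₀ : 0 < c₀)
    (m₀ : ℕ) (hm₀ : q^m₀ ≤ q * c₀) (x : ℂ) (hre : c₀ * ‖x‖ ≤ -x.re) :
    ∀ k j : ℕ, 1 ≤ j → m₀ ≤ j + k →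
      ‖FF q z ((q:ℂ)^j * x)‖
        ≤ Bseq (Real.exp (‖z‖/(1-q))) ‖Efun q z‖ (∑' m : ℕ, ‖eulc q (m+1) * z^(m+1)‖) k
            * Real.exp (q * (-x.re)) := by
  set K := Real.exp (‖z‖/(1-q)) with hK
  set Pa := ‖Efun q z‖ with hPa
  set A := ∑' m : ℕ, ‖eulc q (m+1) * z^(m+1)‖ with hA
  have hKpos : 0 < K := Real.exp_pos _
  have hPa0 : 0 ≤ Pa := norm_nonneg _
  have hA0 : 0 ≤ A := tsum_nonneg (fun m => norm_nonneg _)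
  intro k
  induction k with
  | zero =>
    intro j hj1 hj2
    exact base_bound hq0 hq1 z c₀ m₀ hm₀ x hre j (by omega)
  | succ k ih =>
    intro j hj1 hj2
    by_cases hjm : m₀ ≤ j
    · refine (base_bound hq0 hq1 z c₀ m₀ hm₀ x hre j hjm).trans ?_
      exact mul_le_mul_of_nonneg_right (Bseq_ge hKpos hPa0 hA0 (k+1)) (Real.exp_pos _).le
    -- use the key identity at q^j x
    · have hkey := keyId hq0 hq1 z ((q:ℂ)^j * x)
      have hFF : FF q z ((q:ℂ)^j * x)
          = Efun q z * Complex.exp (-((q:ℂ)^j * x))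
            - ∑' m : ℕ, eulc q (m+1) * z^(m+1) * FF q z ((q:ℂ)^(m+1) * ((q:ℂ)^j * x)) := by
        rw [← hkey]; ring
      rw [hFF]
      have harg : ∀ m : ℕ, (q:ℂ)^(m+1) * ((q:ℂ)^j * x) = (q:ℂ)^(j+m+1) * x := by
        intro m; rw [← mul_assoc, ← pow_add]; ring_nf
      have hterm : ∀ m : ℕ, ‖eulc q (m+1) * z^(m+1) * FF q z ((q:ℂ)^(m+1) * ((q:ℂ)^j * x))‖
          ≤ ‖eulc q (m+1) * z^(m+1)‖ * (Bseq K Pa A k * Real.exp (q * (-x.re))) := by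
        intro m
        rw [norm_mul, harg m]
        apply mul_le_mul_of_nonneg_left _ (norm_nonneg _)
        exact ih (j+m+1) (by omega) (by omega)
      have hterm' : ∀ m : ℕ, ‖eulc q (m+1) * z^(m+1) * FF q z ((q:ℂ)^(m+1) * ((q:ℂ)^j * x))‖
          ≤ ‖eulc q (m+1) * z^(m+1)‖ * (K * Real.exp ‖x‖) := by
        intro m
        rw [norm_mul, harg m]
        apply mul_le_mul_of_nonneg_left _ (norm_nonneg _)
        refine (norm_FF_le hq0 hq1 z _).trans ?_
        apply mul_le_mul_of_nonneg_left _ hKpos.le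
        apply Real.exp_le_exp.2
        rw [norm_mul, norm_pow, norm_Q hq0]
        calc q^(j+m+1) * ‖x‖ ≤ 1 * ‖x‖ :=
              mul_le_mul_of_nonneg_right (pow_le_one₀ hq0.le hq1.le) (norm_nonneg x)
          _ = ‖x‖ := one_mul _
      have hsumnorm : Summable (fun m : ℕ =>
          ‖eulc q (m+1) * z^(m+1) * FF q z ((q:ℂ)^(m+1) * ((q:ℂ)^j * x))‖) := by
        refine Summable.of_nonneg_of_le (fun m => norm_nonneg _) hterm' ?_
        exact (summable_E_tail_norm hq0 hq1 z).mul_right _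
      calc ‖Efun q z * Complex.exp (-((q:ℂ)^j * x))
            - ∑' m : ℕ, eulc q (m+1) * z^(m+1) * FF q z ((q:ℂ)^(m+1) * ((q:ℂ)^j * x))‖
          ≤ ‖Efun q z * Complex.exp (-((q:ℂ)^j * x))‖
            + ‖∑' m : ℕ, eulc q (m+1) * z^(m+1) * FF q z ((q:ℂ)^(m+1) * ((q:ℂ)^j * x))‖ :=
            norm_sub_le _ _
        _ ≤ Pa * Real.exp (q * (-x.re)) + A * (Bseq K Pa A k * Real.exp (q * (-x.re))) := by
            apply add_le_add
            · rw [norm_mul]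
              exact mul_le_mul_of_nonneg_left
                (pow_re_le hq0 hq1 hc₀ x hre j hj1) hPa0
            · refine (norm_tsum_le_tsum_norm hsumnorm).trans ?_
              rw [← tsum_mul_right (f := fun m => ‖eulc q (m+1) * z^(m+1)‖)]
              exact Summable.tsum_le_tsum hterm hsumnorm
                (((summable_E_tail_norm hq0 hq1 z).mul_right _))
        _ ≤ Bseq K Pa A (k+1) * Real.exp (q * (-x.re)) := by
            show _ ≤ (K + Pa + A * Bseq K Pa A k) * Real.exp (q * (-x.re))
            have hE0 : (0:ℝ) ≤ Real.exp (q * (-x.re)) := (Real.exp_pos _).le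
            have expand : (K + Pa + A * Bseq K Pa A k) * Real.exp (q * (-x.re))
                = Pa * Real.exp (q * (-x.re)) + A * (Bseq K Pa A k * Real.exp (q * (-x.re)))
                  + K * Real.exp (q * (-x.re)) := by ring
            rw [expand]
            linarith [mul_nonneg hKpos.le hE0]

lemma R_bound {q : ℝ} (hq0 : 0 < q) (hq1 : q < 1) (z : ℂ) {c₀ : ℝ} (hc₀ : 0 < c₀)
    (m₀ : ℕ) (hm₀ : q^m₀ ≤ q * c₀) (x : ℂ) (hre : c₀ * ‖x‖ ≤ -x.re) :
    ‖FF q z x - Efun q z * Complex.exp (-x)‖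
      ≤ ((∑' m : ℕ, ‖eulc q (m+1) * z^(m+1)‖)
          * Bseq (Real.exp (‖z‖/(1-q))) ‖Efun q z‖ (∑' m : ℕ, ‖eulc q (m+1) * z^(m+1)‖) m₀)
          * Real.exp (q * (-x.re)) := by
  set K := Real.exp (‖z‖/(1-q)) with hK
  set Pa := ‖Efun q z‖ with hPa
  set A := ∑' m : ℕ, ‖eulc q (m+1) * z^(m+1)‖ with hA
  have hKpos : 0 < K := Real.exp_pos _
  have hkey := keyId hq0 hq1 z x
  have hFF : FF q z x - Efun q z * Complex.exp (-x)
      = -∑' m : ℕ, eulc q (m+1) * z^(m+1) * FF q z ((q:ℂ)^(m+1) * x) := by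
    rw [← hkey]; ring
  rw [hFF, norm_neg]
  have hterm : ∀ m : ℕ, ‖eulc q (m+1) * z^(m+1) * FF q z ((q:ℂ)^(m+1) * x)‖
      ≤ ‖eulc q (m+1) * z^(m+1)‖ * (Bseq K Pa A m₀ * Real.exp (q * (-x.re))) := by
    intro m
    rw [norm_mul]
    apply mul_le_mul_of_nonneg_left _ (norm_nonneg _)
    exact iter_bound hq0 hq1 z hc₀ m₀ hm₀ x hre m₀ (m+1) (by omega) (by omega)
  have hterm' : ∀ m : ℕ, ‖eulc q (m+1) * z^(m+1) * FF q z ((q:ℂ)^(m+1) * x)‖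
      ≤ ‖eulc q (m+1) * z^(m+1)‖ * (K * Real.exp ‖x‖) := by
    intro m
    rw [norm_mul]
    apply mul_le_mul_of_nonneg_left _ (norm_nonneg _)
    refine (norm_FF_le hq0 hq1 z _).trans ?_
    apply mul_le_mul_of_nonneg_left _ hKpos.le
    apply Real.exp_le_exp.2
    rw [norm_mul, norm_pow, norm_Q hq0]
    calc q^(m+1) * ‖x‖ ≤ 1 * ‖x‖ :=
          mul_le_mul_of_nonneg_right (pow_le_one₀ hq0.le hq1.le) (norm_nonneg x)
      _ = ‖x‖ := one_mul _
  have hsumnorm : Summable (fun m : ℕ =>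
      ‖eulc q (m+1) * z^(m+1) * FF q z ((q:ℂ)^(m+1) * x)‖) := by
    refine Summable.of_nonneg_of_le (fun m => norm_nonneg _) hterm' ?_
    exact (summable_E_tail_norm hq0 hq1 z).mul_right _
  refine (norm_tsum_le_tsum_norm hsumnorm).trans ?_
  have hstep := Summable.tsum_le_tsum hterm hsumnorm
    ((summable_E_tail_norm hq0 hq1 z).mul_right (Bseq K Pa A m₀ * Real.exp (q * (-x.re))))
  refine hstep.trans ?_
  rw [tsum_mul_right]
  show A * (Bseq K Pa A m₀ * Real.exp (q * (-x.re))) ≤ A * Bseq K Pa A m₀ * Real.exp (q * (-x.re))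
  rw [mul_assoc]

end Iter

end Stmt8

/-- in any sector `a < arg x < b` with `π/2 < a < b < 3π/2`,
`|F(μ;q,x) - (q^μ;q)_∞ e^{-x}| ≤ C e^{-q Re x}`; in particular
`e^x F(μ;q,x) → (q^μ;q)_∞` as `|x| → ∞` in the sector. -/
theorem stmt8 (q : ℝ) (hq0 : 0 < q) (hq1 : q < 1)
    (μ : ℂ) (a b : ℝ) (ha : Real.pi / 2 < a) (hab : a < b) (hb : b < 3 * Real.pi / 2) :
    (∃ C : ℝ, 0 < C ∧ ∀ r : ℝ, 0 < r → ∀ ψ : ℝ, a < ψ → ψ < b →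
      ‖F μ q ((r : ℂ) * Complex.exp (Complex.I * ψ)) -
          qPochInf (qpow q μ) (q : ℂ) *
            Complex.exp (-((r : ℂ) * Complex.exp (Complex.I * ψ)))‖ ≤
        C * Real.exp (-q * ((r : ℂ) * Complex.exp (Complex.I * ψ)).re)) ∧
    (∀ ε : ℝ, 0 < ε → ∃ M : ℝ, ∀ r : ℝ, M < r → ∀ ψ : ℝ, a < ψ → ψ < b →
      ‖Complex.exp ((r : ℂ) * Complex.exp (Complex.I * ψ)) *
          F μ q ((r : ℂ) * Complex.exp (Complex.I * ψ)) -
          qPochInf (qpow q μ) (q : ℂ)‖ < ε) := by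
  have hπ : (0:ℝ) < Real.pi := Real.pi_pos
  set c : ℂ := qpow q μ with hc
  -- geometry of the sector
  have hcosa : Real.cos a < 0 :=
    Real.cos_neg_of_pi_div_two_lt_of_lt ha (by linarith)
  have hcosb : Real.cos b < 0 :=
    Real.cos_neg_of_pi_div_two_lt_of_lt (by linarith) (by linarith)
  set c₀ : ℝ := -(max (Real.cos a) (Real.cos b)) with hc₀def
  have hc₀ : 0 < c₀ := by
    have := max_lt hcosa hcosb
    rw [hc₀def]; linarith
  have hcos_le : ∀ ψ : ℝ, a < ψ → ψ < b → Real.cos ψ ≤ -c₀ := by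
    intro ψ hψ1 hψ2
    rw [hc₀def, neg_neg, le_max_iff]
    by_cases hψπ : ψ ≤ Real.pi
    · exact Or.inl (Real.cos_le_cos_of_nonneg_of_le_pi (by linarith) hψπ hψ1.le)
    · push_neg at hψπ
      right
      have h1 : Real.cos ψ = Real.cos (2*Real.pi - ψ) := (Real.cos_two_pi_sub ψ).symm
      have h2 : Real.cos b = Real.cos (2*Real.pi - b) := (Real.cos_two_pi_sub b).symm
      rw [h1, h2]
      exact Real.cos_le_cos_of_nonneg_of_le_pi (by linarith) (by linarith) (by linarith)
  obtain ⟨m₀, hm₀'⟩ := exists_pow_lt_of_lt_one (x := q * c₀) (by positivity) hq1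
  have hm₀ : q^m₀ ≤ q * c₀ := hm₀'.le
  set K := Real.exp (‖c‖/(1-q)) with hK
  set A := ∑' m : ℕ, ‖Stmt8.eulc q (m+1) * c^(m+1)‖ with hA
  set Pa := ‖Stmt8.Efun q c‖ with hPa
  set B := Stmt8.Bseq K Pa A m₀ with hB
  have hKpos : 0 < K := Real.exp_pos _
  have hA0 : 0 ≤ A := tsum_nonneg fun m => norm_nonneg _
  have hPa0 : 0 ≤ Pa := norm_nonneg _
  have hBK : K ≤ B := Stmt8.Bseq_ge hKpos hPa0 hA0 m₀
  set C := A * B + 1 with hCdef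
  have hABC : A * B ≤ C := by rw [hCdef]; linarith
  have hC : 0 < C := by nlinarith
  have hxnorm : ∀ (r : ℝ), 0 < r → ∀ (ψ : ℝ),
      ‖(r:ℂ) * Complex.exp (Complex.I * ψ)‖ = r := by
    intro r hr ψ
    rw [norm_mul, Complex.norm_real, Real.norm_eq_abs, abs_of_pos hr,
      Complex.norm_exp]
    simp
  have hxre : ∀ (r : ℝ) (ψ : ℝ),
      ((r:ℂ) * Complex.exp (Complex.I * ψ)).re = r * Real.cos ψ := by
    intro r ψ
    rw [Complex.re_ofReal_mul, mul_comm Complex.I (ψ:ℂ), Complex.exp_ofReal_mul_I_re]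
  have hsector : ∀ (r : ℝ), 0 < r → ∀ (ψ : ℝ), a < ψ → ψ < b →
      c₀ * ‖(r:ℂ) * Complex.exp (Complex.I * ψ)‖
        ≤ -((r:ℂ) * Complex.exp (Complex.I * ψ)).re := by
    intro r hr ψ h1 h2
    rw [hxnorm r hr ψ, hxre r ψ]
    have := hcos_le ψ h1 h2
    nlinarith
  have hPeq : qPochInf c (q:ℂ) = Stmt8.Efun q c := Stmt8.qPochInf_eq hq0 hq1 c
  constructor
  · refine ⟨C, hC, ?_⟩
    intro r hr ψ h1 h2
    set x := (r:ℂ) * Complex.exp (Complex.I * ψ) with hx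
    have hmain := Stmt8.R_bound hq0 hq1 c hc₀ m₀ hm₀ x (hsector r hr ψ h1 h2)
    rw [Stmt8.F_eq_FF, hPeq]
    calc ‖Stmt8.FF q c x - Stmt8.Efun q c * Complex.exp (-x)‖
        ≤ (A * B) * Real.exp (q * (-x.re)) := hmain
      _ ≤ C * Real.exp (-q * x.re) := by
          rw [show q * (-x.re) = -q * x.re by ring]
          exact mul_le_mul_of_nonneg_right hABC (Real.exp_pos _).le
  · intro ε hε
    set D := (1-q) * c₀ with hD
    have hDpos : 0 < D := by
      rw [hD]; have : (0:ℝ) < 1 - q := by linarith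
      positivity
    refine ⟨max 0 (Real.log (C/ε) / D), ?_⟩
    intro r hrM ψ h1 h2
    have hr : 0 < r := lt_of_le_of_lt (le_max_left 0 _) hrM
    set x := (r:ℂ) * Complex.exp (Complex.I * ψ) with hx
    have hmain := Stmt8.R_bound hq0 hq1 c hc₀ m₀ hm₀ x (hsector r hr ψ h1 h2)
    have hexp : Complex.exp x * F μ q x - qPochInf c (q:ℂ)
        = Complex.exp x * (Stmt8.FF q c x - Stmt8.Efun q c * Complex.exp (-x)) := by
      rw [hPeq, Stmt8.F_eq_FF, mul_sub]
      congr 1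
      rw [mul_comm (Stmt8.Efun q c) (Complex.exp (-x)), ← mul_assoc, ← Complex.exp_add]
      rw [add_neg_cancel, Complex.exp_zero, one_mul]
    rw [hexp, norm_mul]
    have h3 : ‖Complex.exp x‖ = Real.exp x.re := by
      rw [Complex.norm_exp]
    have hre_le : x.re ≤ -(c₀ * r) := by
      rw [hx, hxre r ψ]
      have := hcos_le ψ h1 h2
      nlinarith
    calc ‖Complex.exp x‖ * ‖Stmt8.FF q c x - Stmt8.Efun q c * Complex.exp (-x)‖
        ≤ Real.exp x.re * ((A * B) * Real.exp (q * (-x.re))) := by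
          rw [h3]
          exact mul_le_mul_of_nonneg_left hmain (Real.exp_pos _).le
      _ = (A * B) * Real.exp ((1-q) * x.re) := by
          rw [mul_comm (Real.exp x.re), mul_assoc, ← Real.exp_add]
          congr 2
          ring
      _ ≤ C * Real.exp (-(D * r)) := by
          apply mul_le_mul hABC _ (Real.exp_pos _).le hC.le
          apply Real.exp_le_exp.2
          rw [hD]
          nlinarith [hre_le]
      _ < ε := by
          have hlog : Real.log (C/ε) / D < r := lt_of_le_of_lt (le_max_right 0 _) hrM
          have hDr : Real.log (C/ε) < D * r := by
            rw [div_lt_iff₀ hDpos] at hlog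
            linarith [hlog]
          have hCe : C / ε < Real.exp (D * r) := by
            calc C / ε = Real.exp (Real.log (C/ε)) := (Real.exp_log (by positivity)).symm
              _ < Real.exp (D * r) := Real.exp_lt_exp.2 hDr
          rw [Real.exp_neg, ← div_eq_mul_inv, div_lt_iff₀ (Real.exp_pos _)]
          rw [div_lt_iff₀ hε] at hCe
          linarith [hCe]
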